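/- Let M > 0, let m ≥ 1 and N ≥ 2 be integers, and let r₀ ∈ (0,1) satisfy r₀^m − 1 + 2M(r₀^m + r₀ − 1 + (1−r₀^m)ln(1−r₀^m) + (1−r₀)ln(1−r₀) − Σ_{n=2}^{N−1} r₀ⁿ/(n(n−1)) + 2 ln 2) = 0. Then for the function f_M(z) = z + 2M Σ_{n=2}^∞ zⁿ/(n(n−1)) (whose coefficients are a_n = 2M/(n(n−1)), b_n = 0), equality holds: |f_M(r₀^m)| + Σ_{n=N}^∞ (2M/(n(n−1))) r₀ⁿ = 1 + 2M(1 − 2 ln 2) = d(f_M(0), ∂f_M(𝔻)). -/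

import Mathlib

open Filter MeasureTheory

/-- Euclidean distance from `f 0` to the boundary of `f(𝔻)`, defined as
`liminf_{|z| → 1⁻} |f z - f 0|`. -/
noncomputable def bdyDist (f : ℂ → ℂ) : ℝ :=
  Filter.liminf (fun z : ℂ => ‖f z - f 0‖)
    (Filter.comap (fun z : ℂ => ‖z‖) (nhdsWithin 1 (Set.Iio 1)))

/-- `f = h + conj g` belongs to the class `P⁰_H(M)`:  `h z = z + ∑_{n≥2} a n * z^n`,
`g z = ∑_{n≥2} b n * z^n` on the unit disk, and `Re (z h''(z)) > -M + |z g''(z)|` there. -/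
def PH0 (M : ℝ) (a b : ℕ → ℂ) (h g : ℂ → ℂ) : Prop :=
  (∀ z ∈ Metric.ball (0 : ℂ) 1,
      HasSum (fun n : ℕ => a (n + 2) * z ^ (n + 2)) (h z - z)) ∧
  (∀ z ∈ Metric.ball (0 : ℂ) 1,
      HasSum (fun n : ℕ => b (n + 2) * z ^ (n + 2)) (g z)) ∧
  (∀ z ∈ Metric.ball (0 : ℂ) 1,
      -M + ‖z * deriv (deriv g) z‖ < (z * deriv (deriv h) z).re)

/-- The extremal function `f_M z = z + 2M ∑_{n≥2} z^n/(n(n-1))`. -/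
noncomputable def fM (M : ℝ) : ℂ → ℂ :=
  fun z => z + 2 * (M : ℂ) * ∑' n : ℕ, z ^ (n + 2) / (((n : ℂ) + 2) * ((n : ℂ) + 1))

lemma keyR {x : ℝ} (hx : |x| < 1) :
    HasSum (fun n : ℕ => x ^ (n + 2) / (((n : ℝ) + 2) * ((n : ℝ) + 1)))
      (x + (1 - x) * Real.log (1 - x)) := by
  have h := Real.hasSum_pow_div_log_of_abs_lt_one hx
  have hA : HasSum (fun n : ℕ => x ^ (n + 2) / ((n : ℝ) + 1)) (x * (-Real.log (1 - x))) :=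
    (h.mul_left x).congr_fun fun n => by ring
  have hB : HasSum (fun n : ℕ => x ^ (n + 2) / ((n : ℝ) + 2))
      (-Real.log (1 - x) - x) := by
    have h2 : HasSum (fun n : ℕ => x ^ ((n + 1) + 1) / (((n + 1 : ℕ) : ℝ) + 1))
        (-Real.log (1 - x) - x) := by
      apply (hasSum_nat_add_iff (f := fun n : ℕ => x ^ (n + 1) / ((n : ℝ) + 1)) 1).mpr
      convert h using 1
      · rfl
      rw [Finset.sum_range_one]; push_cast; ring
    exact h2.congr_fun (g := fun n : ℕ => x ^ (n + 2) / ((n : ℝ) + 2))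
      (fun n => by push_cast; ring_nf)
  have hres := hA.sub hB
  have h4 := hres.congr_fun
    (g := fun n : ℕ => x ^ (n + 2) / (((n : ℝ) + 2) * ((n : ℝ) + 1)))
    (fun n => by
      have h1 : ((n : ℝ) + 1) ≠ 0 := by positivity
      have h2 : ((n : ℝ) + 2) ≠ 0 := by positivity
      field_simp
      ring)
  convert h4 using 1
  · rfl
  ring

lemma keyC {z : ℂ} (hz : ‖z‖ < 1) :
    HasSum (fun n : ℕ => z ^ (n + 2) / (((n : ℂ) + 2) * ((n : ℂ) + 1)))
      (z + (1 - z) * Complex.log (1 - z)) := by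
  have hz' : ‖z‖ < 1 := hz
  have h := Complex.hasSum_taylorSeries_neg_log hz'
  -- h : HasSum (fun n : ℕ => z ^ n / n) (-Complex.log (1 - z))
  have hA : HasSum (fun n : ℕ => z ^ (n + 2) / ((n : ℂ) + 1)) (z * (-Complex.log (1 - z))) := by
    have h1 : HasSum (fun n : ℕ => z * (z ^ n / (n : ℂ))) (z * (-Complex.log (1 - z))) :=
      h.mul_left z
    have h2 : HasSum (fun n : ℕ => z * (z ^ (n + 1) / ((n + 1 : ℕ) : ℂ)))
        (z * (-Complex.log (1 - z))) := by
      apply (hasSum_nat_add_iff (f := fun n : ℕ => z * (z ^ n / (n : ℂ))) 1).mpr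
      convert h1 using 1
      · rfl
      rw [Finset.sum_range_one]
      norm_num
    exact h2.congr_fun fun n => by push_cast; ring
  have hB : HasSum (fun n : ℕ => z ^ (n + 2) / ((n : ℂ) + 2))
      (-Complex.log (1 - z) - z) := by
    have h2 : HasSum (fun n : ℕ => z ^ (n + 2) / (((n + 2 : ℕ) : ℂ)))
        (-Complex.log (1 - z) - z) := by
      apply (hasSum_nat_add_iff (f := fun n : ℕ => z ^ n / (n : ℂ)) 2).mpr
      convert h using 1
      · rfl
      rw [Finset.sum_range_succ, Finset.sum_range_one]
      norm_num
    exact h2.congr_fun fun n => by push_cast; ring_nf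
  have hres := hA.sub hB
  have h4 := hres.congr_fun
    (g := fun n : ℕ => z ^ (n + 2) / (((n : ℂ) + 2) * ((n : ℂ) + 1)))
    (fun n => by
      have h1 : ((n : ℂ) + 1) ≠ 0 := by
        intro hc
        have := congrArg Complex.re hc
        simp at this
        nlinarith [Nat.cast_nonneg (α := ℝ) n, this]
      have h2 : ((n : ℂ) + 2) ≠ 0 := by
        intro hc
        have := congrArg Complex.re hc
        simp at this
        nlinarith [Nat.cast_nonneg (α := ℝ) n, this]
      field_simp
      ring)
  convert h4 using 1
  · rfl
  ring

lemma fM_eq (M : ℝ) {z : ℂ} (hz : ‖z‖ < 1) :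
    fM M z = z + 2 * (M : ℂ) * (z + (1 - z) * Complex.log (1 - z)) := by
  unfold fM
  rw [(keyC hz).tsum_eq]

lemma slit (w : ℂ) (hw : ‖w‖ < 1) : (1 - w) ∈ Complex.slitPlane := by
  constructor
  · have := Complex.abs_re_le_norm w
    simp only [Complex.sub_re, Complex.one_re]
    have : w.re ≤ ‖w‖ := (abs_le.mp (Complex.abs_re_le_norm w)).2
    linarith

lemma one_sub_ne (w : ℂ) (hw : ‖w‖ < 1) : (1 : ℂ) - w ≠ 0 :=
  Complex.slitPlane_ne_zero (slit w hw)

lemma hasDerivAt_F (M : ℝ) {w : ℂ} (hw : ‖w‖ < 1) :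
    HasDerivAt (fun z : ℂ => z + 2 * (M : ℂ) * (z + (1 - z) * Complex.log (1 - z)))
      (1 - 2 * (M : ℂ) * Complex.log (1 - w)) w := by
  have h0 : (1 : ℂ) - w ≠ 0 := one_sub_ne w hw
  have hlog : HasDerivAt (fun z : ℂ => Complex.log (1 - z)) ((1 - w)⁻¹ * (-1)) w := by
    have hinner : HasDerivAt (fun z : ℂ => 1 - z) (-1) w := by
      simpa using (hasDerivAt_id w).const_sub 1
    exact (Complex.hasDerivAt_log (slit w hw)).comp w hinner
  have hprod : HasDerivAt (fun z : ℂ => (1 - z) * Complex.log (1 - z))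
      ((-1) * Complex.log (1 - w) + (1 - w) * ((1 - w)⁻¹ * (-1))) w := by
    have hinner : HasDerivAt (fun z : ℂ => 1 - z) (-1) w := by
      simpa using (hasDerivAt_id w).const_sub 1
    exact hinner.mul hlog
  have h1 : HasDerivAt (fun z : ℂ => z + (1 - z) * Complex.log (1 - z))
      (1 + ((-1) * Complex.log (1 - w) + (1 - w) * ((1 - w)⁻¹ * (-1)))) w :=
    (hasDerivAt_id w).add hprod
  have h2 : HasDerivAt (fun z : ℂ => z + 2 * (M : ℂ) * (z + (1 - z) * Complex.log (1 - z)))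
      (1 + 2 * (M : ℂ) * (1 + ((-1) * Complex.log (1 - w) + (1 - w) * ((1 - w)⁻¹ * (-1))))) w :=
    (hasDerivAt_id w).add (h1.const_mul (2 * (M : ℂ)))
  convert h2 using 1
  field_simp
  ring

lemma abs_fM_ge (M : ℝ) (hM : 0 < M) {z : ℂ} (hz : ‖z‖ < 1) :
    (1 + 2*M) * ‖z‖ - 2*M*(1 + ‖z‖) * Real.log (1 + ‖z‖)
      ≤ ‖fM M z‖ := by
  rcases eq_or_ne z 0 with rfl | hz0
  · simp [fM_eq M (z := 0) (by simp), Complex.log_one]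
  set r : ℝ := ‖z‖ with hr
  have hrpos : 0 < r := norm_pos_iff.mpr hz0
  set F : ℂ → ℂ := fun w => w + 2 * (M : ℂ) * (w + (1 - w) * Complex.log (1 - w)) with hF
  set ψ : ℝ → ℝ := fun t => ((starRingEnd ℂ) z * F ((t:ℂ) * z)).re with hψdef
  set B : ℝ → ℝ := fun t => r^2*t - 2*M*r*((1 + t*r) * Real.log (1 + t*r) - t*r) with hBdef
  have habs : ∀ t : ℝ, t ∈ Set.Icc (0:ℝ) 1 → ‖(t:ℂ) * z‖ < 1 := by
    intro t ht
    rw [norm_mul, Complex.norm_real, Real.norm_eq_abs, abs_of_nonneg ht.1]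
    calc t * r ≤ 1 * r := by nlinarith [ht.2]
    _ < 1 := by simpa using hz
  have hψ : ∀ t ∈ Set.Icc (0:ℝ) 1, HasDerivAt ψ
      (((starRingEnd ℂ) z * (z * (1 - 2 * (M : ℂ) * Complex.log (1 - (t:ℂ) * z)))).re) t := by
    intro t ht
    have hw : HasDerivAt (fun t : ℝ => (t:ℂ) * z) z t := by
      simpa using (Complex.ofRealCLM.hasDerivAt (x := t)).mul_const z
    have hF' := hasDerivAt_F M (habs t ht)
    have hcomp : HasDerivAt (fun t : ℝ => F ((t:ℂ) * z))
        (z • (1 - 2 * (M : ℂ) * Complex.log (1 - (t:ℂ) * z))) t :=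
      HasDerivAt.scomp t hF' hw
    have hmul : HasDerivAt (fun t : ℝ => (starRingEnd ℂ) z * F ((t:ℂ) * z))
        ((starRingEnd ℂ) z * (z * (1 - 2 * (M : ℂ) * Complex.log (1 - (t:ℂ) * z)))) t := by
      simpa [smul_eq_mul] using hcomp.const_mul ((starRingEnd ℂ) z)
    exact Complex.reCLM.hasFDerivAt.comp_hasDerivAt t hmul
  have hB : ∀ t ∈ Set.Icc (0:ℝ) 1, HasDerivAt B
      (r^2 * (1 - 2*M* Real.log (1 + t*r))) t := by
    intro t ht
    have hpos : (0:ℝ) < 1 + t * r := by nlinarith [ht.1]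
    have hinner : HasDerivAt (fun t : ℝ => 1 + t * r) r t := by
      simpa using ((hasDerivAt_id t).mul_const r).const_add 1
    have hlog : HasDerivAt (fun t : ℝ => Real.log (1 + t * r)) ((1 + t*r)⁻¹ * r) t :=
      (Real.hasDerivAt_log hpos.ne').comp (h₂ := Real.log) t hinner
    have hprod : HasDerivAt (fun t : ℝ => (1 + t*r) * Real.log (1 + t*r))
        (r * Real.log (1 + t*r) + (1 + t*r) * ((1 + t*r)⁻¹ * r)) t := hinner.mul hlog
    have : HasDerivAt B (r^2 * 1 - 2*M*r*((r * Real.log (1 + t*r) + (1 + t*r) * ((1 + t*r)⁻¹ * r)) - 1 * r)) t := by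
      apply HasDerivAt.sub
      · simpa using (hasDerivAt_id t).const_mul (r^2)
      · exact (hprod.sub ((hasDerivAt_id t).mul_const r)).const_mul (2*M*r)
    convert this using 1
    have hne : 1 + t * r ≠ 0 := hpos.ne'
    have hne' : 1 + r * t ≠ 0 := by rw [mul_comm]; exact hpos.ne'
    field_simp
    ring
  have hχmono : MonotoneOn (fun t => ψ t - B t) (Set.Icc (0:ℝ) 1) := by
    have hd : ∀ t ∈ Set.Icc (0:ℝ) 1, HasDerivAt (fun t => ψ t - B t)
        (((starRingEnd ℂ) z * (z * (1 - 2 * (M : ℂ) * Complex.log (1 - (t:ℂ) * z)))).re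
          - r^2 * (1 - 2*M* Real.log (1 + t*r))) t :=
      fun t ht => (hψ t ht).sub (hB t ht)
    apply monotoneOn_of_deriv_nonneg (convex_Icc 0 1)
    · exact fun t ht => (hd t ht).continuousAt.continuousWithinAt
    · intro t ht
      rw [interior_Icc] at ht
      exact (hd t (Set.mem_Icc_of_Ioo ht)).differentiableAt.differentiableWithinAt
    · intro t ht
      rw [interior_Icc] at ht
      have ht' := Set.mem_Icc_of_Ioo ht
      rw [(hd t ht').deriv]
      -- compute the real part
      have hcz : (starRingEnd ℂ) z * z = ((r^2 : ℝ) : ℂ) := by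
        rw [mul_comm, Complex.mul_conj, Complex.normSq_eq_norm_sq]
      have hre : ((starRingEnd ℂ) z * (z * (1 - 2 * (M : ℂ) * Complex.log (1 - (t:ℂ) * z)))).re
          = r^2 * (1 - 2*M*Real.log (‖1 - (t:ℂ) * z‖)) := by
        rw [← mul_assoc, hcz, Complex.re_ofReal_mul]
        congr 1
        have h2M : (2 * (M:ℂ)) = ((2*M : ℝ) : ℂ) := by push_cast; ring
        rw [Complex.sub_re, Complex.one_re, h2M, Complex.re_ofReal_mul, Complex.log_re]
      rw [hre]
      have habs1 : ‖1 - (t:ℂ) * z‖ ≤ 1 + t * r := by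
        calc ‖1 - (t:ℂ) * z‖ ≤ ‖(1:ℂ)‖ + ‖(t:ℂ)*z‖ :=
          norm_sub_le 1 ((t:ℂ)*z)
        _ = 1 + t * r := by
          rw [norm_one, norm_mul, Complex.norm_real, Real.norm_eq_abs, abs_of_nonneg ht'.1]
      have habs0 : 0 < ‖1 - (t:ℂ) * z‖ := by
        exact norm_pos_iff.mpr (one_sub_ne ((t:ℂ)*z) (habs t ht'))
      have hloglog : Real.log (‖1 - (t:ℂ) * z‖) ≤ Real.log (1 + t*r) :=
        Real.log_le_log habs0 habs1
      nlinarith [mul_nonneg (mul_nonneg (le_of_lt hM) (sq_nonneg r)) (sub_nonneg.mpr hloglog)]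
  have h01 := hχmono (Set.left_mem_Icc.mpr zero_le_one) (Set.right_mem_Icc.mpr zero_le_one) zero_le_one
  have hψ0 : ψ 0 = 0 := by simp [hψdef, hF, Complex.log_one]
  have hB0 : B 0 = 0 := by simp [hBdef]
  have hB1 : B 1 = r^2*1 - 2*M*r*((1 + 1*r) * Real.log (1 + 1*r) - 1*r) := rfl
  have hψ1 : ψ 1 ≤ r * ‖fM M z‖ := by
    have : ψ 1 = ((starRingEnd ℂ) z * F z).re := by simp [hψdef]
    rw [this]
    calc ((starRingEnd ℂ) z * F z).re ≤ ‖(starRingEnd ℂ) z * F z‖ :=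
      Complex.re_le_norm _
    _ = r * ‖F z‖ := by rw [norm_mul, Complex.norm_conj]
    _ = r * ‖fM M z‖ := by rw [fM_eq M hz]
  have hkey : B 1 ≤ r * ‖fM M z‖ := by
    have h01' : ψ 0 - B 0 ≤ ψ 1 - B 1 := h01
    linarith [hψ1, h01']
  have : r * ((1 + 2*M) * r - 2*M*(1 + r) * Real.log (1 + r)) ≤ r * ‖fM M z‖ := by
    calc r * ((1 + 2*M) * r - 2*M*(1 + r) * Real.log (1 + r))
        = B 1 := by rw [hB1]; ring
    _ ≤ r * ‖fM M z‖ := hkey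
  exact le_of_mul_le_mul_left (by linarith) hrpos

lemma fM_real (M : ℝ) {x : ℝ} (h0 : 0 ≤ x) (h1 : x < 1) :
    fM M ((x : ℝ) : ℂ) = (((x + 2*M*(x + (1-x)*Real.log (1-x))) : ℝ) : ℂ) := by
  have habs : ‖((x:ℝ) : ℂ)‖ < 1 := by
    rwa [Complex.norm_real, Real.norm_eq_abs, abs_of_nonneg h0]
  rw [fM_eq M habs]
  have h2 : (1:ℂ) - (x:ℂ) = (((1 - x : ℝ)) : ℂ) := by push_cast; ring
  rw [h2, ← Complex.ofReal_log (by linarith)]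
  push_cast
  ring

/-- Sharpness of the radius of Theorem 2.7: equality for the extremal function `f_M`. -/
theorem bohr_rogosinski_pow_sharp (M : ℝ) (hM : 0 < M) (m N : ℕ) (hm : 1 ≤ m) (hN : 2 ≤ N)
    (r₀ : ℝ) (hr₀ : r₀ ∈ Set.Ioo (0 : ℝ) 1)
    (hroot : r₀ ^ m - 1 + 2 * M * (r₀ ^ m + r₀ - 1
      + (1 - r₀ ^ m) * Real.log (1 - r₀ ^ m) + (1 - r₀) * Real.log (1 - r₀)
      - ∑ n ∈ Finset.Icc 2 (N - 1), r₀ ^ n / ((n : ℝ) * ((n : ℝ) - 1)) + 2 * Real.log 2) = 0) :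
    (‖fM M ((r₀ : ℂ) ^ m)‖
        + ∑' n : ℕ, (2 * M / (((n : ℝ) + N) * ((n : ℝ) + N - 1))) * r₀ ^ (n + N)
      = 1 + 2 * M * (1 - 2 * Real.log 2)) ∧
    bdyDist (fM M) = 1 + 2 * M * (1 - 2 * Real.log 2) := by
  obtain ⟨hr0, hr1⟩ := hr₀
  set ρ : ℝ := r₀ ^ m with hρdef
  have hρ0 : 0 < ρ := pow_pos hr0 m
  have hρ1 : ρ < 1 := pow_lt_one₀ hr0.le hr1 (by omega)
  -- closed forms
  have hSρ : HasSum (fun n : ℕ => ρ ^ (n + 2) / (((n : ℝ) + 2) * ((n : ℝ) + 1)))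
      (ρ + (1 - ρ) * Real.log (1 - ρ)) := keyR (by rw [abs_of_nonneg hρ0.le]; exact hρ1)
  have hSρ0 : 0 ≤ ρ + (1 - ρ) * Real.log (1 - ρ) :=
    hSρ.nonneg fun n => by positivity
  have hcast : ((r₀ : ℂ)) ^ m = ((ρ : ℝ) : ℂ) := by rw [hρdef]; push_cast; ring
  have term1 : ‖fM M ((r₀ : ℂ) ^ m)‖
      = ρ + 2*M*(ρ + (1-ρ)*Real.log (1-ρ)) := by
    rw [hcast, fM_real M hρ0.le hρ1, Complex.norm_real, Real.norm_eq_abs, abs_of_nonneg (by nlinarith)]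
  -- the tail sum
  set f : ℕ → ℝ := fun k => r₀ ^ k / ((k : ℝ) * ((k : ℝ) - 1)) with hfdef
  have hf2 : HasSum (fun n : ℕ => f (n + 2)) (r₀ + (1 - r₀) * Real.log (1 - r₀)) := by
    refine (keyR (x := r₀) (by rw [abs_of_nonneg hr0.le]; exact hr1)).congr_fun fun n => ?_
    simp only [hfdef]
    push_cast
    ring_nf
  have hf : HasSum f (r₀ + (1 - r₀) * Real.log (1 - r₀)) := by
    have h := (hasSum_nat_add_iff (f := f) 2).mp hf2
    have hsum : ∑ i ∈ Finset.range 2, f i = 0 := by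
      rw [Finset.sum_range_succ, Finset.sum_range_one]
      simp [hfdef]
    rw [hsum, add_zero] at h
    exact h
  have hfN : HasSum (fun n : ℕ => f (n + N))
      ((r₀ + (1 - r₀) * Real.log (1 - r₀)) - ∑ i ∈ Finset.range N, f i) := by
    apply (hasSum_nat_add_iff (f := f) N).mpr
    convert hf using 1
    · rfl
    ring
  have hIcc : ∑ i ∈ Finset.range N, f i
      = ∑ n ∈ Finset.Icc 2 (N - 1), r₀ ^ n / ((n : ℝ) * ((n : ℝ) - 1)) := by
    refine (Finset.sum_subset ?_ ?_).symm
    · intro x hx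
      simp only [Finset.mem_Icc] at hx
      simp only [Finset.mem_range]
      omega
    · intro x hx hnx
      simp only [Finset.mem_range] at hx
      simp only [Finset.mem_Icc] at hnx
      have : x = 0 ∨ x = 1 := by omega
      rcases this with rfl | rfl <;> simp [hfdef]
  have term2 : ∑' n : ℕ, (2 * M / (((n : ℝ) + N) * ((n : ℝ) + N - 1))) * r₀ ^ (n + N)
      = 2 * M * ((r₀ + (1 - r₀) * Real.log (1 - r₀))
          - ∑ n ∈ Finset.Icc 2 (N - 1), r₀ ^ n / ((n : ℝ) * ((n : ℝ) - 1))) := by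
    rw [← hIcc]
    refine ((hfN.mul_left (2*M)).congr_fun fun n => ?_).tsum_eq
    simp only [hfdef]
    push_cast
    ring
  have part1 : ‖fM M ((r₀ : ℂ) ^ m)‖
        + ∑' n : ℕ, (2 * M / (((n : ℝ) + N) * ((n : ℝ) + N - 1))) * r₀ ^ (n + N)
      = 1 + 2 * M * (1 - 2 * Real.log 2) := by
    rw [term1, term2]
    linear_combination hroot
  refine ⟨part1, ?_⟩
  -- Part 2 : the boundary distance
  set d : ℝ := 1 + 2 * M * (1 - 2 * Real.log 2) with hddef
  have htail_nonneg : 0 ≤ ∑' n : ℕ, (2 * M / (((n : ℝ) + N) * ((n : ℝ) + N - 1))) * r₀ ^ (n + N) := by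
    apply tsum_nonneg
    intro n
    have hN2 : (2:ℝ) ≤ (N:ℝ) := by exact_mod_cast hN
    have h1 : (0:ℝ) ≤ (n:ℝ) + N := by positivity
    have h2 : (0:ℝ) ≤ (n:ℝ) + N - 1 := by
      have : (0:ℝ) ≤ (n:ℝ) := Nat.cast_nonneg n
      linarith
    have h3 : (0:ℝ) ≤ 2 * M / (((n : ℝ) + N) * ((n : ℝ) + N - 1)) :=
      div_nonneg (by linarith) (mul_nonneg h1 h2)
    exact mul_nonneg h3 (pow_nonneg hr0.le _)
  have hd0 : 0 ≤ d := by
    rw [← part1]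
    have := norm_nonneg (fM M ((r₀ : ℂ) ^ m))
    linarith
  have hfM0 : fM M 0 = 0 := by
    rw [fM_eq M (by simp)]
    simp [Complex.log_one]
  -- the filter
  set Fl : Filter ℂ := Filter.comap (fun z : ℂ => ‖z‖) (nhdsWithin 1 (Set.Iio 1)) with hFl
  have hIoo : Set.Ioo (0:ℝ) 1 ∈ nhdsWithin (1:ℝ) (Set.Iio 1) :=
    Ioo_mem_nhdsLT_of_mem (by constructor <;> norm_num)
  have hFlneBot : Fl.NeBot := by
    rw [hFl, Filter.comap_neBot_iff]
    intro t ht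
    have h2 : t ∩ Set.Ioo 0 1 ∈ nhdsWithin (1:ℝ) (Set.Iio 1) := Filter.inter_mem ht hIoo
    obtain ⟨s, hs⟩ := (nhdsLT_neBot (1:ℝ)).nonempty_of_mem h2
    exact ⟨(s : ℂ), by rw [Complex.norm_real, Real.norm_eq_abs, abs_of_pos hs.2.1]; exact hs.1⟩
  -- the comparison function L
  set L : ℝ → ℝ := fun s => (1 + 2*M) * s - 2*M*(1 + s) * Real.log (1 + s) with hLdef
  have hL1 : L 1 = d := by
    rw [hLdef, hddef]
    simp only
    rw [show (1:ℝ) + 1 = 2 by norm_num]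
    ring
  have hLcont : ContinuousAt L 1 := by
    have hlog : ContinuousAt (fun s : ℝ => Real.log (1 + s)) 1 := by
      have := (Real.continuousAt_log (x := (1:ℝ)+1) (by norm_num)).comp
        (f := fun s : ℝ => 1 + s) (x := (1:ℝ)) (by fun_prop)
      exact this
    exact ((continuousAt_const.mul continuousAt_id).sub
      ((continuousAt_const.mul (continuousAt_const.add continuousAt_id)).mul hlog))
  -- rewrite the liminf function
  have hufun : (fun z : ℂ => ‖fM M z - fM M 0‖) = fun z => ‖fM M z‖ := by
    funext z
    rw [hfM0, sub_zero]
  unfold bdyDist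
  rw [hufun, ← hFl]
  -- upper bound for |fM| on the disk
  have hglobal : ∀ z : ℂ, ‖z‖ < 1 → ‖fM M z‖ ≤ 1 + 2*M := by
    intro z hz
    set r : ℝ := ‖z‖ with hr
    have hr0' : 0 ≤ r := norm_nonneg z
    have hnorm : HasSum (fun n : ℕ => ‖z ^ (n + 2) / (((n : ℂ) + 2) * ((n : ℂ) + 1))‖)
        (r + (1 - r) * Real.log (1 - r)) := by
      refine (keyR (x := r) (by rwa [abs_of_nonneg hr0'])).congr_fun fun n => ?_
      rw [norm_div, norm_pow, norm_mul]
      have h1 : ((n : ℂ) + 2) = (((n : ℝ) + 2 : ℝ) : ℂ) := by push_cast; ring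
      have h2 : ((n : ℂ) + 1) = (((n : ℝ) + 1 : ℝ) : ℂ) := by push_cast; ring
      rw [h1, h2, Complex.norm_real, Complex.norm_real, Real.norm_eq_abs, Real.norm_eq_abs,
        abs_of_nonneg (by positivity), abs_of_nonneg (by positivity)]
    have hbound : ‖∑' n : ℕ, z ^ (n + 2) / (((n : ℂ) + 2) * ((n : ℂ) + 1))‖
        ≤ r + (1 - r) * Real.log (1 - r) := by
      rw [← hnorm.tsum_eq]
      exact norm_tsum_le_tsum_norm hnorm.summable
    have hS1 : r + (1 - r) * Real.log (1 - r) ≤ 1 := by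
      have hlog0 : Real.log (1 - r) ≤ 0 := Real.log_nonpos (by linarith) (by linarith)
      nlinarith
    calc ‖fM M z‖ = ‖fM M z‖ := rfl
    _ ≤ ‖z‖ + ‖(2 * (M:ℂ))‖ * ‖∑' n : ℕ, z ^ (n + 2) / (((n : ℂ) + 2) * ((n : ℂ) + 1))‖ := by
      rw [fM]
      refine (norm_add_le _ _).trans ?_
      rw [norm_mul]
    _ ≤ 1 + (2*M) * 1 := by
      have h2M : ‖(2 * (M:ℂ))‖ = 2*M := by
        rw [norm_mul, Complex.norm_real, Real.norm_eq_abs, abs_of_pos hM]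
        norm_num
      rw [h2M]
      have := hbound.trans hS1
      have hz1 : ‖z‖ ≤ 1 := le_of_lt hz
      have h0 : (0:ℝ) ≤ ‖∑' n : ℕ, z ^ (n + 2) / (((n : ℂ) + 2) * ((n : ℂ) + 1))‖ :=
        norm_nonneg _
      nlinarith
    _ = 1 + 2*M := by ring
  have hev_lt1 : {z : ℂ | ‖z‖ < 1} ∈ Fl := by
    rw [hFl]
    exact Filter.preimage_mem_comap self_mem_nhdsWithin
  -- coboundedness / boundedness
  have hcobdd : Filter.IsCoboundedUnder (· ≥ ·) Fl (fun z => ‖fM M z‖) := by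
    apply Filter.isCoboundedUnder_ge_of_eventually_le Fl (x := 1 + 2*M)
    filter_upwards [hev_lt1] with z hz
    exact hglobal z hz
  have hbdd : Filter.IsBoundedUnder (· ≥ ·) Fl (fun z => ‖fM M z‖) :=
    Filter.isBoundedUnder_of ⟨0, fun z => norm_nonneg _⟩
  -- lower bound
  have hlower : d ≤ Filter.liminf (fun z => ‖fM M z‖) Fl := by
    apply le_of_forall_pos_le_add
    intro ε hε
    have hle : d - ε ≤ Filter.liminf (fun z => ‖fM M z‖) Fl := by
      apply Filter.le_liminf_of_le hcobdd
      have hmemL : {s : ℝ | d - ε < L s} ∈ nhds (1:ℝ) := by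
        have : L 1 ∈ Set.Ioi (d - ε) := by rw [hL1]; simp only [Set.mem_Ioi]; linarith
        exact hLcont.preimage_mem_nhds (Ioi_mem_nhds (by rw [hL1]; linarith))
      have hmem : {s : ℝ | d - ε < L s} ∩ Set.Iio 1 ∈ nhdsWithin (1:ℝ) (Set.Iio 1) :=
        Filter.inter_mem (mem_nhdsWithin_of_mem_nhds hmemL) self_mem_nhdsWithin
      have hpre : (fun z : ℂ => ‖z‖) ⁻¹' ({s : ℝ | d - ε < L s} ∩ Set.Iio 1) ∈ Fl :=
        Filter.preimage_mem_comap hmem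
      filter_upwards [hpre] with z hz
      obtain ⟨hz1, hz2⟩ := hz
      have := abs_fM_ge M hM (z := z) hz2
      have hLz : d - ε < L (‖z‖) := hz1
      rw [hLdef] at hLz
      simp only at hLz
      linarith
    linarith
  -- upper bound
  have hupper : Filter.liminf (fun z => ‖fM M z‖) Fl ≤ d := by
    apply le_of_forall_pos_le_add
    intro ε hε
    apply Filter.liminf_le_of_frequently_le _ hbdd
    rw [Filter.frequently_iff]
    intro U hU
    obtain ⟨T, hT, hTsub⟩ := Filter.mem_comap.mp hU
    have hLabs : ContinuousAt (fun s => |L s|) 1 := hLcont.abs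
    have hA : {s : ℝ | |L s| < d + ε} ∈ nhds (1:ℝ) := by
      have h1 : Set.Iio (d + ε) ∈ nhds ((fun s => |L s|) 1) := by
        apply Iio_mem_nhds
        simp only [hL1, abs_of_nonneg hd0]
        linarith
      have := hLabs.preimage_mem_nhds h1
      exact this
    have hW : T ∩ ({s : ℝ | |L s| < d + ε} ∩ Set.Ioo 0 1) ∈ nhdsWithin (1:ℝ) (Set.Iio 1) :=
      Filter.inter_mem hT (Filter.inter_mem (mem_nhdsWithin_of_mem_nhds hA) hIoo)
    obtain ⟨s, hsT, hsL, hs0, hs1⟩ :=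
      (nhdsLT_neBot (1:ℝ)).nonempty_of_mem hW
    refine ⟨(-(s:ℝ) : ℂ), ?_, ?_⟩
    · apply hTsub
      simp only [Set.mem_preimage, norm_neg, Complex.norm_real, Real.norm_eq_abs, abs_of_pos hs0]
      exact hsT
    · have habs : ‖(-(s:ℝ) : ℂ)‖ < 1 := by
        rw [norm_neg, Complex.norm_real, Real.norm_eq_abs, abs_of_pos hs0]
        exact hs1
      have hval : fM M (-(s:ℝ) : ℂ) = ((-(L s) : ℝ) : ℂ) := by
        rw [show (-(s:ℝ) : ℂ) = (((-s : ℝ)) : ℂ) by push_cast; ring]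
        rw [fM_eq M (by rwa [show (((-s : ℝ)) : ℂ) = -(s:ℝ) by push_cast; ring])]
        rw [show (1:ℂ) - ((-s : ℝ) : ℂ) = (((1 + s : ℝ)) : ℂ) by push_cast; ring]
        rw [← Complex.ofReal_log (by linarith)]
        rw [hLdef]
        push_cast
        ring
      rw [hval, Complex.norm_real, Real.norm_eq_abs, abs_neg]
      exact le_of_lt hsL
  linarith [hlower, hupper]
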